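/- Let R ⊆ R' be a finite extension of discrete valuation rings with fraction field extension K ⊆ K' separable, and let Δ^{-1} = {α ∈ K' : Tr_{K'/K}(α R') ⊆ R} be the inverse different. Then the R'-module map Δ^{-1} → Hom_R(R', R) sending α to the map x ↦ Tr_{K'/K}(αx) is an isomorphism of R'-modules. -/

import Mathlib

/-- Let `R ⊆ R'` be a finite extension of discrete valuation rings with fraction field
extension `K ⊆ K'` finite separable, and let
`Δ⁻¹ = {α ∈ K' : Tr_{K'/K}(α R') ⊆ R}` be the inverse different.  Then the `R'`-module
map `Δ⁻¹ → Hom_R(R', R)` sending `α` to `x ↦ Tr_{K'/K}(αx)` is an isomorphism of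
`R'`-modules (here expressed as: there is a bijection `e` from `Δ⁻¹` onto
`Hom_R(R', R)` satisfying the defining trace formula; such an `e` is unique and
automatically `R'`-linear). -/
theorem stmt9 (R R' : Type*) [CommRing R] [IsDomain R] [IsDiscreteValuationRing R]
    [CommRing R'] [IsDomain R'] [IsDiscreteValuationRing R']
    [Algebra R R'] [Module.Finite R R'] [FaithfulSMul R R']
    (K K' : Type*) [Field K] [Field K'] [Algebra R K] [IsFractionRing R K]
    [Algebra R' K'] [IsFractionRing R' K']
    [Algebra K K'] [Algebra R K'] [IsScalarTower R K K'] [IsScalarTower R R' K']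
    [FiniteDimensional K K'] [Algebra.IsSeparable K K'] :
    ∃ e : {α : K' // ∀ x : R',
        Algebra.trace K K' (α * algebraMap R' K' x) ∈ (algebraMap R K).range}
      ≃ (R' →ₗ[R] R),
      ∀ (α : {α : K' // ∀ x : R',
          Algebra.trace K K' (α * algebraMap R' K' x) ∈ (algebraMap R K).range})
        (x : R'),
        algebraMap R K ((e α) x) = Algebra.trace K K' (α.1 * algebraMap R' K' x) := by
  classical
  have hinj : Function.Injective (algebraMap R K) := IsFractionRing.injective R K
  haveI : Algebra.IsIntegral R R' := Algebra.IsIntegral.of_finite R R'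
  haveI hIC : IsIntegralClosure R' R K' := by
    refine ⟨IsFractionRing.injective R' K', fun {x} => ⟨fun hx => ?_, ?_⟩⟩
    · exact IsIntegrallyClosed.isIntegral_iff.mp (IsIntegral.tower_top (A := R') hx)
    · rintro ⟨y, rfl⟩
      exact (Algebra.IsIntegral.isIntegral (R := R) y).algebraMap
  haveI : IsLocalization (Algebra.algebraMapSubmonoid R' (nonZeroDivisors R)) K' :=
    IsIntegralClosure.isLocalization R K K' R'
  -- the trace form and its dual equivalence
  set T := Algebra.traceForm K K' with hT
  have hTnd : T.Nondegenerate := traceForm_nondegenerate K K'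
  -- the forward map
  set S := {α : K' // ∀ x : R',
      Algebra.trace K K' (α * algebraMap R' K' x) ∈ (algebraMap R K).range} with hS
  have spec : ∀ (α : S) (x : R'),
      algebraMap R K ((α.2 x).choose) = Algebra.trace K K' (α.1 * algebraMap R' K' x) :=
    fun α x => (α.2 x).choose_spec
  let F : S → (R' →ₗ[R] R) := fun α =>
    { toFun := fun x => (α.2 x).choose
      map_add' := by
        intro x y
        apply hinj
        rw [spec α (x + y), map_add, map_add, spec α x, spec α y, mul_add, map_add]
      map_smul' := by
        intro r x
        apply hinj
        have hm : (algebraMap R' K') (r • x)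
            = algebraMap K K' (algebraMap R K r) * algebraMap R' K' x := by
          rw [Algebra.smul_def, map_mul, ← IsScalarTower.algebraMap_apply R R' K',
            IsScalarTower.algebraMap_apply R K K']
        rw [RingHom.id_apply, smul_eq_mul, map_mul (algebraMap R K) r, spec α (r • x), spec α x, hm,
          show α.1 * (algebraMap K K' (algebraMap R K r) * algebraMap R' K' x)
            = algebraMap R K r • (α.1 * algebraMap R' K' x) by rw [Algebra.smul_def]; ring,
          map_smul, smul_eq_mul] }
  have hFspec : ∀ (α : S) (x : R'),
      algebraMap R K (F α x) = Algebra.trace K K' (α.1 * algebraMap R' K' x) :=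
    fun α x => spec α x
  -- every element of K' is a quotient of an element of R' by a nonzero element of R
  have hquot : ∀ y : K', ∃ (s : R) (x : R'), s ∈ nonZeroDivisors R ∧
      algebraMap R K' s * y = algebraMap R' K' x := by
    intro y
    obtain ⟨⟨x, s⟩, h⟩ :=
      IsLocalization.surj (Algebra.algebraMapSubmonoid R' (nonZeroDivisors R)) y
    obtain ⟨t, ht, hts⟩ := s.2
    refine ⟨t, x, ht, ?_⟩
    rw [IsScalarTower.algebraMap_apply R R' K', hts, mul_comm, ← h]
  have hFinj : Function.Injective F := by
    intro α β hαβ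
    have key : ∀ y : K', Algebra.trace K K' (α.1 * y) = Algebra.trace K K' (β.1 * y) := by
      intro y
      obtain ⟨s, x, hs, hsy⟩ := hquot y
      have hs0 : algebraMap R K s ≠ 0 := by
        simpa using fun h => nonZeroDivisors.ne_zero hs (hinj (by simpa using h))
      have h1 : ∀ γ : K', algebraMap R K s * Algebra.trace K K' (γ * y)
          = Algebra.trace K K' (γ * algebraMap R' K' x) := by
        intro γ
        rw [← hsy, IsScalarTower.algebraMap_apply R K K']
        rw [show γ * (algebraMap K K' (algebraMap R K s) * y)
            = algebraMap R K s • (γ * y) by rw [Algebra.smul_def]; ring]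
        rw [map_smul, smul_eq_mul]
      have h2 : Algebra.trace K K' (α.1 * algebraMap R' K' x)
          = Algebra.trace K K' (β.1 * algebraMap R' K' x) := by
        rw [← hFspec α x, ← hFspec β x, hαβ]
      have := (h1 α.1).trans (h2.trans (h1 β.1).symm)
      exact mul_left_cancel₀ hs0 this
    have : α.1 = β.1 := by
      have hsub : ∀ y : K', T (α.1 - β.1) y = 0 := by
        intro y
        have h0 : T (α.1 - β.1) y = Algebra.trace K K' ((α.1 - β.1) * y) := rfl
        rw [h0, sub_mul, map_sub, key y, sub_self]
      exact sub_eq_zero.mp (hTnd.1 _ hsub)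
    exact Subtype.ext this
  have hFsurj : Function.Surjective F := by
    intro φ
    let f : R' →ₗ[R] K' := (IsScalarTower.toAlgHom R R' K').toLinearMap
    let g : R →ₗ[R] K := Algebra.linearMap R K
    haveI hf : IsLocalizedModule (nonZeroDivisors R) f :=
      isLocalizedModule_iff_isLocalization.mpr inferInstance
    haveI hg : IsLocalizedModule (nonZeroDivisors R) g :=
      (isLocalizedModule_iff_isLocalization' (nonZeroDivisors R) K).mpr inferInstance
    let ψ : K' →ₗ[K] K :=
      IsLocalizedModule.mapExtendScalars (nonZeroDivisors R) f g K φ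
    have hψ : ∀ x : R', ψ (algebraMap R' K' x) = algebraMap R K (φ x) := by
      intro x
      have h1 : ψ (algebraMap R' K' x)
          = (IsLocalizedModule.map (nonZeroDivisors R) f g φ) (f x) := rfl
      rw [h1, IsLocalizedModule.map_apply]
      rfl
    set α : K' := (T.toDual hTnd).symm ψ with hα
    have hαprop : ∀ y : K', Algebra.trace K K' (α * y) = ψ y := by
      intro y
      exact LinearMap.BilinForm.apply_toDual_symm_apply (B := T) (hB := hTnd) ψ y
    have hmem : ∀ x : R',
        Algebra.trace K K' (α * algebraMap R' K' x) ∈ (algebraMap R K).range := by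
      intro x
      rw [hαprop, hψ]
      exact ⟨φ x, rfl⟩
    refine ⟨⟨α, hmem⟩, ?_⟩
    ext x
    apply hinj
    rw [hFspec ⟨α, hmem⟩ x]
    simp only [hαprop, hψ]
  exact ⟨Equiv.ofBijective F ⟨hFinj, hFsurj⟩, fun α x => hFspec α x⟩
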